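/- Let b ∈ C^{2k+2} be 1-periodic, k ≥ 0, and let ȳ be the implementable semi-Lagrangian DG operator T̃_{b,Δt} defined via Gauss quadrature on subintervals where u^n(y_·(−Δt)) is smooth. There exist constants C₁, C ≥ 0 such that ‖T̃_{b,Δt} u‖_{L²} ≤ e^{C₁Δt}‖u‖_{L²} for all u ∈ V_k, and consequently the iterates u^{n+1} = T̃_{b,Δt} u^n satisfy ‖u^n‖_{L²} ≤ e^{C₁ t_n}‖u^0‖_{L²} for all n (unconditional stability): given the quadrature-error bound ‖T̃_{b,Δt}u − Π(u(y_·(−Δt)))‖_{L²} ≤ CΔtΔx²‖u‖_{L²} and the flow stability ‖u(y_·(−Δt))‖_{L²} ≤ e^{LΔt/2}‖u‖_{L²}, one has the stability constant e^{LΔt/2} + CΔtΔx² ≤ e^{(L/2 + CΔx²)Δt}. -/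

import Mathlib

/-- Unconditional stability of the implementable non-constant-advection SLDG operator:
given the projection contraction `‖Π w‖ ≤ ‖w‖`, the flow stability
`‖u∘y(−Δt)‖ ≤ e^{LΔt/2}‖u‖` and the quadrature-error bound
`‖T̃u − Π(u∘y(−Δt))‖ ≤ CΔtΔx²‖u‖` on `V_k`, there is `C₁ ≥ 0` with
`‖T̃u‖ ≤ e^{C₁Δt}‖u‖` on `V_k`, whence the iterates satisfy
`‖T̃ⁿu⁰‖ ≤ e^{C₁ t_n}‖u⁰‖` with `t_n = nΔt`. -/
theorem stmt12 {E : Type*} [NormedAddCommGroup E] [NormedSpace ℝ E]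
    (V : Set E) (Ttil Proj flowMap : E → E)
    (L C Δt Δx : ℝ) (hL : 0 ≤ L) (hC : 0 ≤ C) (hΔt : 0 < Δt) (hΔx : 0 ≤ Δx)
    (hProj : ∀ w : E, ‖Proj w‖ ≤ ‖w‖)
    (hflow : ∀ u : E, ‖flowMap u‖ ≤ Real.exp (L * Δt / 2) * ‖u‖)
    (hquad : ∀ u ∈ V, ‖Ttil u - Proj (flowMap u)‖ ≤ C * Δt * Δx ^ 2 * ‖u‖)
    (hinv : ∀ u ∈ V, Ttil u ∈ V) :
    ∃ C₁ : ℝ, 0 ≤ C₁ ∧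
      (∀ u ∈ V, ‖Ttil u‖ ≤ Real.exp (C₁ * Δt) * ‖u‖) ∧
      (∀ u ∈ V, ∀ n : ℕ, ‖Ttil^[n] u‖ ≤ Real.exp (C₁ * ((n : ℝ) * Δt)) * ‖u‖) := by
  set C₁ : ℝ := L / 2 + C * Δx ^ 2 with hC₁
  have hC₁0 : 0 ≤ C₁ := by positivity
  have hstep : ∀ u ∈ V, ‖Ttil u‖ ≤ Real.exp (C₁ * Δt) * ‖u‖ := by
    intro u hu
    have key : ‖Ttil u‖ ≤ (Real.exp (L * Δt / 2) + C * Δt * Δx ^ 2) * ‖u‖ := by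
      calc ‖Ttil u‖ ≤ ‖Ttil u - Proj (flowMap u)‖ + ‖Proj (flowMap u)‖ := by
              simpa using norm_add_le (Ttil u - Proj (flowMap u)) (Proj (flowMap u))
        _ ≤ C * Δt * Δx ^ 2 * ‖u‖ + Real.exp (L * Δt / 2) * ‖u‖ :=
              add_le_add (hquad u hu) ((hProj _).trans (hflow u))
        _ = (Real.exp (L * Δt / 2) + C * Δt * Δx ^ 2) * ‖u‖ := by ring
    refine key.trans (mul_le_mul_of_nonneg_right ?_ (norm_nonneg u))
    have h1 : Real.exp (L * Δt / 2) + C * Δt * Δx ^ 2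
        ≤ Real.exp (L * Δt / 2) * (1 + C * Δt * Δx ^ 2) := by
      have := Real.one_le_exp (by positivity : (0:ℝ) ≤ L * Δt / 2)
      nlinarith [mul_nonneg (mul_nonneg hC hΔt.le) (sq_nonneg Δx)]
    have h2 : (1 : ℝ) + C * Δt * Δx ^ 2 ≤ Real.exp (C * Δt * Δx ^ 2) := by
      linarith [Real.add_one_le_exp (C * Δt * Δx ^ 2)]
    calc Real.exp (L * Δt / 2) + C * Δt * Δx ^ 2
        ≤ Real.exp (L * Δt / 2) * Real.exp (C * Δt * Δx ^ 2) :=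
          h1.trans (mul_le_mul_of_nonneg_left h2 (Real.exp_pos _).le)
      _ = Real.exp (C₁ * Δt) := by
          rw [← Real.exp_add, hC₁]; ring_nf
  refine ⟨C₁, hC₁0, hstep, ?_⟩
  intro u hu n
  induction n generalizing u with
  | zero => simpa using le_mul_of_one_le_left (norm_nonneg u) (Real.one_le_exp (by positivity))
  | succ n ih =>
    rw [Function.iterate_succ_apply]
    calc ‖Ttil^[n] (Ttil u)‖ ≤ Real.exp (C₁ * ((n : ℝ) * Δt)) * ‖Ttil u‖ :=
          ih (Ttil u) (hinv u hu)
      _ ≤ Real.exp (C₁ * ((n : ℝ) * Δt)) * (Real.exp (C₁ * Δt) * ‖u‖) :=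
          mul_le_mul_of_nonneg_left (hstep u hu) (Real.exp_pos _).le
      _ = Real.exp (C₁ * (((n : ℕ) + 1 : ℝ) * Δt)) * ‖u‖ := by
          rw [← mul_assoc, ← Real.exp_add]; ring_nf
      _ = Real.exp (C₁ * (((n + 1 : ℕ) : ℝ) * Δt)) * ‖u‖ := by push_cast; ring_nf
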